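/- Let E be a locally compact, σ-compact metric space and let m and w be finite Borel measures on E. Then the supremum over all continuous compactly supported g : E → ℝ of ∫_E g dw − ∫_E (e^g − 1) dm equals ∫_E τ(dw/dm) dm (a value in [0,∞]) if w is absolutely continuous with respect to m, and equals +∞ otherwise. -/

import Mathlib

open MeasureTheory Filter
open scoped ENNReal

/-- The cost function `τ(k) = k log k − k + 1` (with `τ(0) = 1`, automatic since
`Real.log 0 = 0`). -/
noncomputable def tauCost (k : ℝ) : ℝ := k * Real.log k - k + 1

namespace TauVar

lemma phi_le_phi_left {a b1 b2 : ℝ} (h12 : b1 ≤ b2) (h2 : Real.exp b2 ≤ a) :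
    a * b1 - (Real.exp b1 - 1) ≤ a * b2 - (Real.exp b2 - 1) := by
  have key : (b1 - b2 + 1) * Real.exp b2 ≤ Real.exp b1 := by
    calc (b1 - b2 + 1) * Real.exp b2 ≤ Real.exp (b1 - b2) * Real.exp b2 := by
          nlinarith [Real.add_one_le_exp (b1 - b2), Real.exp_pos b2]
      _ = Real.exp b1 := by rw [← Real.exp_add]; ring_nf
  nlinarith [Real.exp_pos b2]

lemma phi_le_phi_right {a b1 b2 : ℝ} (h12 : b2 ≤ b1) (h2 : a ≤ Real.exp b2) :
    a * b1 - (Real.exp b1 - 1) ≤ a * b2 - (Real.exp b2 - 1) := by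
  have key : (b1 - b2 + 1) * Real.exp b2 ≤ Real.exp b1 := by
    calc (b1 - b2 + 1) * Real.exp b2 ≤ Real.exp (b1 - b2) * Real.exp b2 := by
          nlinarith [Real.add_one_le_exp (b1 - b2), Real.exp_pos b2]
      _ = Real.exp b1 := by rw [← Real.exp_add]; ring_nf
  nlinarith [Real.exp_pos b2]

lemma key_ineq {a : ℝ} (ha : 0 ≤ a) (b : ℝ) :
    a * b - (Real.exp b - 1) ≤ tauCost a := by
  rcases eq_or_lt_of_le ha with h0 | h0
  · simp only [tauCost, ← h0]
    nlinarith [Real.exp_pos b, Real.log_zero]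
  · have hexp : Real.exp (Real.log a) = a := Real.exp_log h0
    have : tauCost a = a * Real.log a - (Real.exp (Real.log a) - 1) := by
      rw [hexp]; simp [tauCost]; ring
    rw [this]
    rcases le_total b (Real.log a) with h | h
    · exact phi_le_phi_left h (by rw [hexp])
    · exact phi_le_phi_right h (by rw [hexp])

lemma tau_nonneg {a : ℝ} (ha : 0 ≤ a) : 0 ≤ tauCost a := by
  have := key_ineq ha 0
  simpa using this

lemma clamp_abs_sub {n s t : ℝ} (h1 : -n ≤ s) (h2 : s ≤ n) :
    |max (-n) (min n t) - s| ≤ |t - s| := by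
  rcases le_total t (-n) with h | h
  · rw [min_eq_right (by linarith), max_eq_left h,
      abs_of_nonpos (by linarith), abs_of_nonpos (by linarith)]
    linarith
  · rcases le_total n t with h' | h'
    · rw [min_eq_left h', max_eq_right (by linarith),
        abs_of_nonneg (by linarith), abs_of_nonneg (by linarith)]
      linarith
    · rw [min_eq_right h', max_eq_right h]

lemma exp_lipschitz {n a b : ℝ} (ha : |a| ≤ n) (hb : |b| ≤ n) :
    |Real.exp a - Real.exp b| ≤ Real.exp n * |a - b| := by
  have ha' := abs_le.1 ha
  have hb' := abs_le.1 hb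
  have main : ∀ u v : ℝ, u ≤ v → v ≤ n →
      Real.exp v - Real.exp u ≤ Real.exp n * (v - u) := by
    intro u v huv hv
    have k1 : Real.exp (u - v) * Real.exp v = Real.exp u := by
      rw [← Real.exp_add]; ring_nf
    have k2 := Real.add_one_le_exp (u - v)
    have k3 : Real.exp v ≤ Real.exp n := Real.exp_le_exp.2 hv
    nlinarith [Real.exp_pos v]
  rcases le_total a b with h | h
  · rw [abs_of_nonpos (by simp [Real.exp_le_exp, h]), abs_of_nonpos (by linarith)]
    have := main a b h hb'.2
    linarith
  · rw [abs_of_nonneg (by simp [Real.exp_le_exp, h]), abs_of_nonneg (by linarith)]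
    exact main b a h ha'.2

lemma cl_eq_left {c L : ℝ} (h : L ≤ -c) (hc : 0 ≤ c) : max (-c) (min c L) = -c := by
  rw [min_eq_right (by linarith), max_eq_left h]

lemma cl_eq_right {c L : ℝ} (h : c ≤ L) (hc : 0 ≤ c) : max (-c) (min c L) = c := by
  rw [min_eq_left h, max_eq_right (by linarith)]

lemma cl_eq_mid {c L : ℝ} (h1 : -c ≤ L) (h2 : L ≤ c) : max (-c) (min c L) = L := by
  rw [min_eq_right h2, max_eq_right h1]







lemma coe_iSup_le {a : ℕ → ℝ≥0∞} {S : EReal} (h : ∀ n, (a n : EReal) ≤ S) :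
    ((⨆ n, a n : ℝ≥0∞) : EReal) ≤ S := by
  by_contra hc
  push_neg at hc
  rcases EReal.lt_iff_exists_real_btwn.mp hc with ⟨x, hSx, hx⟩
  have hS0 : (0 : EReal) ≤ S := le_trans (EReal.coe_ennreal_nonneg (a 0)) (h 0)
  have hx0 : (0 : ℝ) < x := by
    have : (0 : EReal) < (x : EReal) := lt_of_le_of_lt hS0 hSx
    exact_mod_cast this
  have hx' : ENNReal.ofReal x < ⨆ n, a n := by
    rw [← EReal.coe_ennreal_lt_coe_ennreal_iff]
    calc ((ENNReal.ofReal x : ℝ≥0∞) : EReal) = ((max x 0 : ℝ) : EReal) := EReal.coe_ennreal_ofReal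
      _ = (x : EReal) := by rw [max_eq_left hx0.le]
      _ < _ := hx
  rcases lt_iSup_iff.mp hx' with ⟨n, hn⟩
  have : (x : EReal) < (a n : EReal) := by
    calc (x : EReal) = ((max x 0 : ℝ) : EReal) := by rw [max_eq_left hx0.le]
      _ = ((ENNReal.ofReal x : ℝ≥0∞) : EReal) := EReal.coe_ennreal_ofReal.symm
      _ < (a n : EReal) := by rwa [EReal.coe_ennreal_lt_coe_ennreal_iff]
  exact absurd (lt_trans hSx (lt_of_lt_of_le this (h n))) (lt_irrefl S)

variable {E : Type*} [MetricSpace E] [LocallyCompactSpace E] [SigmaCompactSpace E]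
  [MeasurableSpace E] [BorelSpace E]
  (m w : Measure E) [IsFiniteMeasure m] [IsFiniteMeasure w]

/-- The functional value for a bounded measurable `g` is dominated by the sup over
continuous compactly supported functions. -/
lemma sup_ge_of_bddMeasurable {g : E → ℝ} (hg : Measurable g) {n : ℝ} (hn : 0 ≤ n)
    (hgb : ∀ x, |g x| ≤ n) :
    (((∫ x, g x ∂w) - ∫ x, (Real.exp (g x) - 1) ∂m : ℝ) : EReal) ≤
      ⨆ φ : {φ : E → ℝ // Continuous φ ∧ HasCompactSupport φ},
        (((∫ x, φ.1 x ∂w) - ∫ x, (Real.exp (φ.1 x) - 1) ∂m : ℝ) : EReal) := by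
  set S := ⨆ φ : {φ : E → ℝ // Continuous φ ∧ HasCompactSupport φ},
      (((∫ x, φ.1 x ∂w) - ∫ x, (Real.exp (φ.1 x) - 1) ∂m : ℝ) : EReal) with hS
  -- main step: for each ε > 0 there is a continuous compactly supported φ with
  -- F g - ε ≤ F φ
  have main : ∀ ε : ℝ, 0 < ε →
      ((((∫ x, g x ∂w) - ∫ x, (Real.exp (g x) - 1) ∂m) - ε : ℝ) : EReal) ≤ S := by
    intro ε hε
    set δ := ε / (1 + Real.exp n) with hδdef
    have hδ : 0 < δ := div_pos hε (by positivity)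
    -- g integrable wrt m + w
    have hgm : AEStronglyMeasurable g (m + w) := hg.aestronglyMeasurable
    have hgint : Integrable g (m + w) :=
      Integrable.mono' (integrable_const n) hgm
        (Filter.Eventually.of_forall fun x => by simpa using hgb x)
    obtain ⟨φ0, hφ0supp, hφ0close, hφ0cont, hφ0int⟩ :=
      hgint.exists_hasCompactSupport_integral_sub_le hδ
    set φ : E → ℝ := fun x => max (-n) (min n (φ0 x)) with hφdef
    have hφcont : Continuous φ :=
      continuous_const.max (continuous_const.min hφ0cont)
    have hφsupp : HasCompactSupport φ := by
      have : φ = (fun t => max (-n) (min n t)) ∘ φ0 := rfl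
      rw [this]
      exact hφ0supp.comp_left (by simp [hn])
    have hφbd : ∀ x, |φ x| ≤ n := by
      intro x
      rw [abs_le]
      constructor
      · exact le_max_left _ _
      · exact max_le (by linarith) (min_le_left _ _)
    have hclose : ∀ x, |φ x - g x| ≤ |g x - φ0 x| := by
      intro x
      have := abs_le.1 (hgb x)
      rw [abs_sub_comm (g x) (φ0 x)]
      exact clamp_abs_sub this.1 this.2
    -- integrabilities
    have hgw : Integrable g w := (integrable_add_measure.mp hgint).2
    have hgm' : Integrable g m := (integrable_add_measure.mp hgint).1
    have hsubint : Integrable (fun x => g x - φ0 x) (m + w) := hgint.sub hφ0int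
    have hφw : Integrable φ w := hφcont.integrable_of_hasCompactSupport hφsupp
    have hexpφ : Integrable (fun x => Real.exp (φ x) - 1) m := by
      refine Integrable.mono' (integrable_const (Real.exp n + 1))
        ((Real.continuous_exp.comp hφcont).sub continuous_const).aestronglyMeasurable
        (Filter.Eventually.of_forall fun x => ?_)
      have h1 : Real.exp (φ x) ≤ Real.exp n := Real.exp_le_exp.2 (abs_le.1 (hφbd x)).2
      have h2 : 0 < Real.exp (φ x) := Real.exp_pos _
      rw [Real.norm_eq_abs, abs_le]
      constructor <;> linarith
    have hexpg : Integrable (fun x => Real.exp (g x) - 1) m := by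
      refine Integrable.mono' (integrable_const (Real.exp n + 1))
        ((Real.measurable_exp.comp hg).sub measurable_const).aestronglyMeasurable
        (Filter.Eventually.of_forall fun x => ?_)
      have h1 : Real.exp (g x) ≤ Real.exp n := Real.exp_le_exp.2 (abs_le.1 (hgb x)).2
      have h2 : 0 < Real.exp (g x) := Real.exp_pos _
      rw [Real.norm_eq_abs, abs_le]
      constructor <;> linarith
    -- the L¹ distances
    have hw1 : ∫ x, |g x - φ0 x| ∂w ≤ δ := by
      have hsplit : ∫ x, ‖g x - φ0 x‖ ∂(m + w)
          = (∫ x, ‖g x - φ0 x‖ ∂m) + ∫ x, ‖g x - φ0 x‖ ∂w :=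
        integral_add_measure (integrable_add_measure.mp hsubint.norm).1
          (integrable_add_measure.mp hsubint.norm).2
      have hnn : 0 ≤ ∫ x, ‖g x - φ0 x‖ ∂m := integral_nonneg fun x => norm_nonneg _
      simp only [Real.norm_eq_abs] at hsplit hφ0close hnn
      linarith
    have hm1 : ∫ x, |g x - φ0 x| ∂m ≤ δ := by
      have hsplit : ∫ x, ‖g x - φ0 x‖ ∂(m + w)
          = (∫ x, ‖g x - φ0 x‖ ∂m) + ∫ x, ‖g x - φ0 x‖ ∂w :=
        integral_add_measure (integrable_add_measure.mp hsubint.norm).1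
          (integrable_add_measure.mp hsubint.norm).2
      have hnn : 0 ≤ ∫ x, ‖g x - φ0 x‖ ∂w := integral_nonneg fun x => norm_nonneg _
      simp only [Real.norm_eq_abs] at hsplit hφ0close hnn
      linarith
    -- estimate |∫ φ dw − ∫ g dw|
    have est1 : |(∫ x, φ x ∂w) - ∫ x, g x ∂w| ≤ δ := by
      rw [← integral_sub hφw hgw]
      calc |∫ x, (φ x - g x) ∂w| ≤ ∫ x, |φ x - g x| ∂w := by
            simpa [Real.norm_eq_abs] using norm_integral_le_integral_norm (fun x => φ x - g x) (μ := w)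
        _ ≤ ∫ x, |g x - φ0 x| ∂w := by
            refine integral_mono (hφw.sub hgw).abs
              ((integrable_add_measure.mp hsubint).2).abs hclose
        _ ≤ δ := hw1
    -- estimate |∫ (e^φ − 1) dm − ∫ (e^g − 1) dm|
    have est2 : |(∫ x, (Real.exp (φ x) - 1) ∂m) - ∫ x, (Real.exp (g x) - 1) ∂m|
        ≤ Real.exp n * δ := by
      rw [← integral_sub hexpφ hexpg]
      have heq : ∀ x, (Real.exp (φ x) - 1) - (Real.exp (g x) - 1)
          = Real.exp (φ x) - Real.exp (g x) := fun x => by ring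
      calc |∫ x, ((Real.exp (φ x) - 1) - (Real.exp (g x) - 1)) ∂m|
          ≤ ∫ x, |Real.exp (φ x) - Real.exp (g x)| ∂m := by
            simp only [heq]
            simpa [Real.norm_eq_abs] using
              norm_integral_le_integral_norm (fun x => Real.exp (φ x) - Real.exp (g x)) (μ := m)
        _ ≤ ∫ x, Real.exp n * |g x - φ0 x| ∂m := by
            refine integral_mono ((hexpφ.sub hexpg).congr
              (Filter.Eventually.of_forall fun x => by simp only [Pi.sub_apply]; ring)).abs
              (((integrable_add_measure.mp hsubint).1).abs.const_mul _) (fun x => ?_)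
            calc |Real.exp (φ x) - Real.exp (g x)| ≤ Real.exp n * |φ x - g x| :=
                exp_lipschitz (hφbd x) (hgb x)
              _ ≤ Real.exp n * |g x - φ0 x| := by
                have := hclose x
                nlinarith [Real.exp_pos n]
        _ = Real.exp n * ∫ x, |g x - φ0 x| ∂m := integral_const_mul _ _
        _ ≤ Real.exp n * δ := by nlinarith [Real.exp_pos n]
    -- conclude
    have hFφ : ((∫ x, g x ∂w) - ∫ x, (Real.exp (g x) - 1) ∂m) - ε
        ≤ (∫ x, φ x ∂w) - ∫ x, (Real.exp (φ x) - 1) ∂m := by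
      have h1 := abs_le.1 est1
      have h2 := abs_le.1 est2
      have hεδ : δ * (1 + Real.exp n) = ε := by
        rw [hδdef, div_mul_cancel₀ _ (by positivity)]
      nlinarith
    calc ((((∫ x, g x ∂w) - ∫ x, (Real.exp (g x) - 1) ∂m) - ε : ℝ) : EReal)
        ≤ (((∫ x, φ x ∂w) - ∫ x, (Real.exp (φ x) - 1) ∂m : ℝ) : EReal) := by
          exact_mod_cast hFφ
      _ ≤ S := le_iSup (fun φ' : {φ' : E → ℝ // Continuous φ' ∧ HasCompactSupport φ'} =>
          (((∫ x, φ'.1 x ∂w) - ∫ x, (Real.exp (φ'.1 x) - 1) ∂m : ℝ) : EReal))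
          ⟨φ, hφcont, hφsupp⟩
  -- from the ε-approximation to the inequality
  by_contra hc
  push_neg at hc
  rcases EReal.lt_iff_exists_real_btwn.mp hc with ⟨x, hSx, hx⟩
  have hxlt : x < (∫ x, g x ∂w) - ∫ x, (Real.exp (g x) - 1) ∂m := by exact_mod_cast hx
  have := main ((((∫ x, g x ∂w) - ∫ x, (Real.exp (g x) - 1) ∂m)) - x) (by linarith)
  simp only [sub_sub_cancel] at this
  exact absurd (lt_of_le_of_lt this hSx) (lt_irrefl _)

lemma sup_eq_top_of_not_ac (hac : ¬ w ≪ m) :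
    (⨆ g : {g : E → ℝ // Continuous g ∧ HasCompactSupport g},
        (((∫ x, g.1 x ∂w) - ∫ x, (Real.exp (g.1 x) - 1) ∂m : ℝ) : EReal)) = ⊤ := by
  -- find a compact set K with m K = 0 and w K > 0
  have hex : ∃ s, m s = 0 ∧ w s ≠ 0 := by
    by_contra h
    push_neg at h
    exact hac fun s hs => h s hs
  obtain ⟨s, hms, hws⟩ := hex
  obtain ⟨t, hst, htmeas, hmt⟩ := exists_measurable_superset_of_null hms
  have hwt : (0 : ℝ≥0∞) < w t :=
    lt_of_lt_of_le (pos_iff_ne_zero.mpr hws) (measure_mono hst)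
  obtain ⟨K, hKt, hKcomp, hwK⟩ := htmeas.exists_lt_isCompact hwt
  have hmK : m K = 0 := measure_mono_null hKt hmt
  set κ := (w K).toReal with hκdef
  have hκpos : 0 < κ := ENNReal.toReal_pos (ne_of_gt hwK) (measure_ne_top w K)
  rw [iSup_eq_top]
  intro b hb
  obtain ⟨x, hbx, hx⟩ := EReal.lt_iff_exists_real_btwn.mp hb
  set c := max ((x + 2) / κ) 0 with hcdef
  have hc0 : 0 ≤ c := le_max_right _ _
  have hcκ : x + 2 ≤ c * κ := by
    rcases le_or_gt ((x + 2) / κ) 0 with h | h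
    · have hx2 : x + 2 ≤ 0 := by
        by_contra h'
        push_neg at h'
        exact absurd (div_pos h' hκpos) (not_lt.mpr h)
      rw [hcdef, max_eq_right h]
      nlinarith
    · rw [hcdef, max_eq_left h.le, div_mul_cancel₀ _ (ne_of_gt hκpos)]
  -- choose an open set U ⊇ K with m U < exp (-c)
  obtain ⟨U, hKU, hUopen, hmU⟩ := Set.exists_isOpen_lt_of_lt K
    (ENNReal.ofReal (Real.exp (-c)))
    (by rw [hmK]; exact ENNReal.ofReal_pos.mpr (Real.exp_pos _))
  -- Urysohn function
  obtain ⟨u, hu1, hu0, husupp, hurange⟩ :=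
    exists_continuous_one_zero_of_isCompact hKcomp (isClosed_compl_iff.mpr hUopen)
      (Set.disjoint_left.mpr fun x hx hx' => hx' (hKU hx))
  set g : E → ℝ := fun x => c * u x with hgdef
  have hgcont : Continuous g := continuous_const.mul u.continuous
  have hgsupp : HasCompactSupport g := by
    have : g = (fun t => c * t) ∘ u := rfl
    rw [this]
    exact husupp.comp_left (by simp)
  have huw : Integrable (fun x => u x) w :=
    u.continuous.integrable_of_hasCompactSupport husupp
  have hgw : Integrable g w := hgcont.integrable_of_hasCompactSupport hgsupp
  have hexpint : Integrable (fun x => Real.exp (g x) - 1) m := by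
    refine Continuous.integrable_of_hasCompactSupport
      ((Real.continuous_exp.comp hgcont).sub continuous_const) ?_
    have : (fun x => Real.exp (g x) - 1) = (fun t => Real.exp t - 1) ∘ g := rfl
    rw [this]
    exact hgsupp.comp_left (by simp)
  -- lower bound for ∫ g dw
  have hint_ge : c * κ ≤ ∫ x, g x ∂w := by
    have h1 : ∫ x, g x ∂w = c * ∫ x, u x ∂w := integral_const_mul c _
    have h2 : ∫ x in K, (fun x => u x) x ∂w ≤ ∫ x, u x ∂w :=
      setIntegral_le_integral huw (Filter.Eventually.of_forall fun x => (hurange x).1)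
    have h3 : ∫ x in K, u x ∂w = ∫ _ in K, (1 : ℝ) ∂w :=
      setIntegral_congr_fun hKcomp.measurableSet fun x hx => hu1 hx
    have h4 : ∫ _ in K, (1 : ℝ) ∂w = κ := by
      rw [setIntegral_const]; simp [hκdef, measureReal_def]
    rw [h1]
    have : κ ≤ ∫ x, u x ∂w := by rw [← h4, ← h3]; exact h2
    nlinarith
  -- upper bound for ∫ (exp g - 1) dm
  have hexp_le : ∫ x, (Real.exp (g x) - 1) ∂m ≤ 1 := by
    have hbnd_int : Integrable (U.indicator fun _ => Real.exp c - 1) m :=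
      (integrable_const _).indicator hUopen.measurableSet
    have hle : ∀ x, Real.exp (g x) - 1 ≤ U.indicator (fun _ => Real.exp c - 1) x := by
      intro x
      by_cases hx : x ∈ U
      · rw [Set.indicator_of_mem hx]
        have h1 : g x ≤ c := by
          have h2 := (hurange x).2
          have h3 := (hurange x).1
          show c * u x ≤ c
          nlinarith
        have := Real.exp_le_exp.2 h1
        linarith
      · rw [Set.indicator_of_notMem hx]
        have h0 : u x = 0 := hu0 hx
        show Real.exp (c * u x) - 1 ≤ 0
        rw [h0]
        simp
    have h5 : ∫ x, (Real.exp (g x) - 1) ∂m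
        ≤ ∫ x, U.indicator (fun _ => Real.exp c - 1) x ∂m :=
      integral_mono hexpint hbnd_int hle
    have h6 : ∫ x, U.indicator (fun _ => Real.exp c - 1) x ∂m
        = (m U).toReal * (Real.exp c - 1) := by
      rw [integral_indicator_const _ hUopen.measurableSet, smul_eq_mul, measureReal_def]
    have h7 : (m U).toReal ≤ Real.exp (-c) :=
      ENNReal.toReal_le_of_le_ofReal (Real.exp_pos _).le hmU.le
    have h8 : Real.exp c * Real.exp (-c) = 1 := by rw [← Real.exp_add]; simp
    have h9 : (1 : ℝ) ≤ Real.exp c := Real.one_le_exp hc0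
    nlinarith [Real.exp_pos (-c)]
  refine ⟨⟨g, hgcont, hgsupp⟩, ?_⟩
  have hFg : x + 1 ≤ (∫ x, g x ∂w) - ∫ x, (Real.exp (g x) - 1) ∂m := by linarith
  calc b < (x : EReal) := hbx
    _ ≤ (((∫ x, g x ∂w) - ∫ x, (Real.exp (g x) - 1) ∂m : ℝ) : EReal) := by
        exact_mod_cast by linarith
lemma upper_bound (hac : w ≪ m) {g : E → ℝ} (hgc : Continuous g) (hgs : HasCompactSupport g) :
    (((∫ x, g x ∂w) - ∫ x, (Real.exp (g x) - 1) ∂m : ℝ) : EReal) ≤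
      ((∫⁻ x, ENNReal.ofReal (tauCost ((w.rnDeriv m x).toReal)) ∂m : ℝ≥0∞) : EReal) := by
  set f : E → ℝ := fun x => (w.rnDeriv m x).toReal with hfdef
  have hfmeas : Measurable f := (Measure.measurable_rnDeriv w m).ennreal_toReal
  have hf0 : ∀ x, 0 ≤ f x := fun x => ENNReal.toReal_nonneg
  set I := ∫⁻ x, ENNReal.ofReal (tauCost (f x)) ∂m with hIdef
  by_cases hItop : I = ⊤
  · rw [hItop]; exact le_top
  have htau_meas : Measurable fun x => tauCost (f x) := by
    have : Measurable tauCost :=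
      ((measurable_id.mul Real.measurable_log).sub measurable_id).add measurable_const
    exact this.comp hfmeas
  have htau_int : Integrable (fun x => tauCost (f x)) m := by
    refine ⟨htau_meas.aestronglyMeasurable, ?_⟩
    rw [hasFiniteIntegral_iff_ofReal
      (Filter.Eventually.of_forall fun x => tau_nonneg (hf0 x))]
    exact lt_top_iff_ne_top.mpr hItop
  have hgw : Integrable g w := hgc.integrable_of_hasCompactSupport hgs
  have hfg_int : Integrable (fun x => f x * g x) m := by
    have := (integrable_rnDeriv_smul_iff hac (f := g)).mpr hgw
    simpa [smul_eq_mul] using this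
  have hexpg : Integrable (fun x => Real.exp (g x) - 1) m := by
    refine Continuous.integrable_of_hasCompactSupport
      ((Real.continuous_exp.comp hgc).sub continuous_const) ?_
    have : (fun x => Real.exp (g x) - 1) = (fun t => Real.exp t - 1) ∘ g := rfl
    rw [this]
    exact hgs.comp_left (by simp)
  have hrw : ∫ x, g x ∂w = ∫ x, f x * g x ∂m := by
    have := integral_rnDeriv_smul hac (f := g)
    simpa [smul_eq_mul] using this.symm
  have key : (∫ x, g x ∂w) - ∫ x, (Real.exp (g x) - 1) ∂m
      = ∫ x, (f x * g x - (Real.exp (g x) - 1)) ∂m := by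
    rw [hrw, ← integral_sub hfg_int hexpg]
  have hle : ∫ x, (f x * g x - (Real.exp (g x) - 1)) ∂m ≤ ∫ x, tauCost (f x) ∂m :=
    integral_mono (hfg_int.sub hexpg) htau_int fun x => key_ineq (hf0 x) (g x)
  have hIval : (I : EReal) = ((∫ x, tauCost (f x) ∂m : ℝ) : EReal) := by
    rw [hIdef, ← ofReal_integral_eq_lintegral_ofReal htau_int
      (Filter.Eventually.of_forall fun x => tau_nonneg (hf0 x)),
      EReal.coe_ennreal_ofReal, max_eq_left (integral_nonneg fun x => tau_nonneg (hf0 x))]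
  rw [key, hIval]
  exact_mod_cast hle

lemma lower_bound (hac : w ≪ m) :
    ((∫⁻ x, ENNReal.ofReal (tauCost ((w.rnDeriv m x).toReal)) ∂m : ℝ≥0∞) : EReal) ≤
      ⨆ φ : {φ : E → ℝ // Continuous φ ∧ HasCompactSupport φ},
        (((∫ x, φ.1 x ∂w) - ∫ x, (Real.exp (φ.1 x) - 1) ∂m : ℝ) : EReal) := by
  set S := ⨆ φ : {φ : E → ℝ // Continuous φ ∧ HasCompactSupport φ},
      (((∫ x, φ.1 x ∂w) - ∫ x, (Real.exp (φ.1 x) - 1) ∂m : ℝ) : EReal) with hSdef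
  set f : E → ℝ := fun x => (w.rnDeriv m x).toReal with hfdef
  have hfmeas : Measurable f := (Measure.measurable_rnDeriv w m).ennreal_toReal
  have hf0 : ∀ x, 0 ≤ f x := fun x => ENNReal.toReal_nonneg
  have hfint : Integrable f m := Measure.integrable_toReal_rnDeriv
  set I := ∫⁻ x, ENNReal.ofReal (tauCost (f x)) ∂m with hIdef
  set g : ℕ → E → ℝ := fun n x =>
    if f x = 0 then -(n : ℝ) else max (-(n : ℝ)) (min (n : ℝ) (Real.log (f x))) with hgdef
  have hgmeas : ∀ n, Measurable (g n) := fun n =>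
    Measurable.ite (hfmeas (measurableSet_singleton 0)) measurable_const
      (measurable_const.max (measurable_const.min (Real.measurable_log.comp hfmeas)))
  have hgval0 : ∀ (n : ℕ) x, f x = 0 → g n x = -(n : ℝ) := fun n x hx => if_pos hx
  have hgvalpos : ∀ (n : ℕ) x, f x ≠ 0 →
      g n x = max (-(n : ℝ)) (min (n : ℝ) (Real.log (f x))) := fun n x hx => if_neg hx
  have hgbd : ∀ (n : ℕ) x, |g n x| ≤ n := by
    intro n x
    by_cases hx : f x = 0
    · rw [hgval0 n x hx, abs_neg, Nat.abs_cast]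
    · rw [hgvalpos n x hx, abs_le]
      refine ⟨le_max_left _ _, max_le (by linarith [Nat.cast_nonneg (α := ℝ) n]) (min_le_left _ _)⟩
  set h : ℕ → E → ℝ := fun n x => f x * g n x - (Real.exp (g n x) - 1) with hhdef
  -- monotonicity in n
  have hmono : ∀ x, Monotone fun n => h n x := by
    intro x
    apply monotone_nat_of_le_succ
    intro n
    show f x * g n x - (Real.exp (g n x) - 1) ≤ f x * g (n+1) x - (Real.exp (g (n+1) x) - 1)
    have hcast : ((n + 1 : ℕ) : ℝ) = (n : ℝ) + 1 := by push_cast; ring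
    by_cases hx : f x = 0
    · rw [hgval0 n x hx, hgval0 (n+1) x hx, hx, hcast]
      have : Real.exp (-((n : ℝ) + 1)) ≤ Real.exp (-(n : ℝ)) :=
        Real.exp_le_exp.2 (by linarith)
      nlinarith
    · have hxpos : 0 < f x := lt_of_le_of_ne (hf0 x) (Ne.symm hx)
      set L := Real.log (f x) with hLdef
      have hexpL : Real.exp L = f x := Real.exp_log hxpos
      have hn0 : (0 : ℝ) ≤ n := Nat.cast_nonneg n
      have hn1 : (0 : ℝ) ≤ (n : ℝ) + 1 := by linarith
      rw [hgvalpos n x hx, hgvalpos (n+1) x hx, hcast]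
      rcases le_total L (-(n : ℝ)) with hL | hL
      · rw [cl_eq_left hL hn0]
        rcases le_total L (-((n : ℝ) + 1)) with hL2 | hL2
        · rw [cl_eq_left hL2 hn1]
          exact phi_le_phi_right (by linarith)
            (by rw [← hexpL]; exact Real.exp_le_exp.2 hL2)
        · rw [cl_eq_mid hL2 (by linarith)]
          exact phi_le_phi_right hL (le_of_eq hexpL.symm)
      · rcases le_total ((n : ℝ)) L with hL2 | hL2
        · rw [cl_eq_right hL2 hn0]
          rcases le_total ((n : ℝ) + 1) L with hL3 | hL3
          · rw [cl_eq_right hL3 hn1]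
            exact phi_le_phi_left (by linarith)
              (by rw [← hexpL]; exact Real.exp_le_exp.2 hL3)
          · rw [cl_eq_mid (by linarith) hL3]
            exact phi_le_phi_left hL2 (le_of_eq hexpL)
        · rw [cl_eq_mid hL hL2, cl_eq_mid (by linarith) (by linarith)]
  -- pointwise convergence to tauCost ∘ f
  have htend : ∀ x, Filter.Tendsto (fun n => h n x) atTop (nhds (tauCost (f x))) := by
    intro x
    by_cases hx : f x = 0
    · have heq : (fun n : ℕ => h n x) = fun n : ℕ => 1 - Real.exp (-(n : ℝ)) := by
        funext n
        show f x * g n x - (Real.exp (g n x) - 1) = _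
        rw [hgval0 n x hx, hx]
        ring
      have htau : tauCost (f x) = 1 := by rw [hx]; simp [tauCost]
      rw [heq, htau]
      have h1 : Filter.Tendsto (fun n : ℕ => -(n : ℝ)) atTop atBot :=
        tendsto_neg_atTop_atBot.comp tendsto_natCast_atTop_atTop
      have h2 : Filter.Tendsto (fun n : ℕ => Real.exp (-(n : ℝ))) atTop (nhds 0) :=
        Real.tendsto_exp_atBot.comp h1
      simpa using tendsto_const_nhds.sub h2
    · have hxpos : 0 < f x := lt_of_le_of_ne (hf0 x) (Ne.symm hx)
      obtain ⟨N, hN⟩ := exists_nat_ge |Real.log (f x)|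
      apply tendsto_atTop_of_eventually_const (i₀ := N)
      intro n hn
      have habs := abs_le.1 (le_trans hN (Nat.cast_le.2 hn))
      show f x * g n x - (Real.exp (g n x) - 1) = tauCost (f x)
      rw [hgvalpos n x hx, cl_eq_mid (by linarith [habs.1]) habs.2, Real.exp_log hxpos]
      show _ = f x * Real.log (f x) - f x + 1
      ring
  -- nonnegativity of h n + f
  have hpos : ∀ (n : ℕ) x, 0 ≤ h n x + f x := by
    intro n x
    have hn0 : (0 : ℝ) ≤ n := Nat.cast_nonneg n
    show 0 ≤ f x * g n x - (Real.exp (g n x) - 1) + f x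
    by_cases hx : f x = 0
    · rw [hgval0 n x hx, hx]
      have : Real.exp (-(n : ℝ)) ≤ 1 := by
        simpa using Real.exp_le_exp.2 (neg_nonpos.mpr hn0)
      nlinarith
    · have hxpos : 0 < f x := lt_of_le_of_ne (hf0 x) (Ne.symm hx)
      set L := Real.log (f x) with hLdef
      have hexpL : Real.exp L = f x := Real.exp_log hxpos
      rw [hgvalpos n x hx]
      rcases le_total L (-(n : ℝ)) with hL | hL
      · rw [cl_eq_left hL hn0]
        have hfa : f x ≤ Real.exp (-(n : ℝ)) := by
          rw [← hexpL]; exact Real.exp_le_exp.2 hL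
        rcases le_total (n : ℝ) 1 with hn1 | hn1
        · have h1 : Real.exp (-(n : ℝ)) ≤ 1 := by
            simpa using Real.exp_le_exp.2 (neg_nonpos.mpr hn0)
          nlinarith [mul_nonneg (hf0 x) (by linarith : (0:ℝ) ≤ 1 - (n : ℝ))]
        · have hprod : 0 ≤ (Real.exp (-(n : ℝ)) - f x) * ((n : ℝ) - 1) :=
            mul_nonneg (by linarith) (by linarith)
          have hnu : (n : ℝ) * Real.exp (-(n : ℝ)) ≤ 1 := by
            have h8 : Real.exp (-(n : ℝ)) * Real.exp (n : ℝ) = 1 := by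
              rw [← Real.exp_add]; simp
            nlinarith [Real.add_one_le_exp ((n : ℝ)), Real.exp_pos (-(n : ℝ))]
          nlinarith
      · rcases le_total ((n : ℝ)) L with hL2 | hL2
        · rw [cl_eq_right hL2 hn0]
          have hfa : Real.exp ((n : ℝ)) ≤ f x := by
            rw [← hexpL]; exact Real.exp_le_exp.2 hL2
          nlinarith [Real.exp_pos ((n : ℝ)),
            mul_nonneg (by linarith : (0:ℝ) ≤ f x - Real.exp (n : ℝ)) hn0,
            mul_nonneg (Real.exp_pos ((n : ℝ))).le hn0]
        · rw [cl_eq_mid hL hL2, hexpL]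
          have hlog := Real.log_le_sub_one_of_pos (inv_pos.2 hxpos)
          rw [Real.log_inv] at hlog
          have hinv : f x * (f x)⁻¹ = 1 := mul_inv_cancel₀ hx
          nlinarith
  -- measurability and integrability of h n
  have hhmeas : ∀ n, Measurable (h n) := fun n =>
    (hfmeas.mul (hgmeas n)).sub ((Real.measurable_exp.comp (hgmeas n)).sub measurable_const)
  have hmul_int : ∀ n, Integrable (fun x => f x * g n x) m := by
    intro n
    have := (hfint.bdd_mul (hgmeas n).aestronglyMeasurable
      (c := n) (Filter.Eventually.of_forall fun x => by simpa [Real.norm_eq_abs] using hgbd n x))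
    exact this.congr (Filter.Eventually.of_forall fun x => mul_comm _ _)
  have hexp_int : ∀ n, Integrable (fun x => Real.exp (g n x) - 1) m := by
    intro n
    refine Integrable.mono' (integrable_const (Real.exp (n : ℝ) + 1))
      ((Real.measurable_exp.comp (hgmeas n)).sub measurable_const).aestronglyMeasurable
      (Filter.Eventually.of_forall fun x => ?_)
    have h1 : Real.exp (g n x) ≤ Real.exp (n : ℝ) :=
      Real.exp_le_exp.2 (abs_le.1 (hgbd n x)).2
    have h2 : 0 < Real.exp (g n x) := Real.exp_pos _
    rw [Real.norm_eq_abs, abs_le]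
    constructor <;> linarith
  have hhint : ∀ n, Integrable (h n) m := fun n => (hmul_int n).sub (hexp_int n)
  -- the functional value of g n
  have hFh : ∀ n, (∫ x, g n x ∂w) - ∫ x, (Real.exp (g n x) - 1) ∂m = ∫ x, h n x ∂m := by
    intro n
    have hrw : ∫ x, g n x ∂w = ∫ x, f x * g n x ∂m := by
      have := integral_rnDeriv_smul hac (f := g n)
      simpa [smul_eq_mul] using this.symm
    rw [hrw, ← integral_sub (hmul_int n) (hexp_int n)]
  have hS0 : (0 : EReal) ≤ S := by
    have hsupp0 : HasCompactSupport (fun _ : E => (0 : ℝ)) :=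
      HasCompactSupport.intro isCompact_empty (fun x _ => rfl)
    have hle := le_iSup (fun φ' : {φ' : E → ℝ // Continuous φ' ∧ HasCompactSupport φ'} =>
        (((∫ x, φ'.1 x ∂w) - ∫ x, (Real.exp (φ'.1 x) - 1) ∂m : ℝ) : EReal))
        ⟨fun _ => 0, continuous_const, hsupp0⟩
    refine le_trans (le_of_eq ?_) hle
    simp
  have hSn : ∀ n, ((∫ x, h n x ∂m : ℝ) : EReal) ≤ S := by
    intro n
    rw [← hFh n]
    exact sup_ge_of_bddMeasurable m w (hgmeas n) (Nat.cast_nonneg n) (hgbd n)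
  -- the lintegral chain
  set C := ENNReal.ofReal (∫ x, f x ∂m) with hCdef
  have hCeq : C = ∫⁻ x, ENNReal.ofReal (f x) ∂m :=
    ofReal_integral_eq_lintegral_ofReal hfint (Filter.Eventually.of_forall hf0)
  have hAn_le : ∀ n, ∫⁻ x, ENNReal.ofReal (h n x + f x) ∂m
      ≤ ENNReal.ofReal (∫ x, h n x ∂m) + C := by
    intro n
    have heq := ofReal_integral_eq_lintegral_ofReal (f := fun x => h n x + f x)
      ((hhint n).add hfint) (Filter.Eventually.of_forall fun x => hpos n x)
    rw [← heq, integral_add (hhint n) hfint, hCdef]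
    exact ENNReal.ofReal_add_le
  have hptsup : ∀ x, (⨆ n, ENNReal.ofReal (h n x + f x))
      = ENNReal.ofReal (tauCost (f x) + f x) := by
    intro x
    refine iSup_eq_of_tendsto
      (fun i j hij => ENNReal.ofReal_le_ofReal (by linarith [hmono x hij])) ?_
    exact (ENNReal.continuous_ofReal.tendsto _).comp ((htend x).add tendsto_const_nhds)
  have htau_meas : Measurable fun x => tauCost (f x) := by
    have : Measurable tauCost :=
      ((measurable_id.mul Real.measurable_log).sub measurable_id).add measurable_const
    exact this.comp hfmeas
  have hsup : I + C = ⨆ n, ∫⁻ x, ENNReal.ofReal (h n x + f x) ∂m := by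
    rw [← lintegral_iSup (f := fun n x => ENNReal.ofReal (h n x + f x))
      (fun n => ((hhmeas n).add hfmeas).ennreal_ofReal)
      (fun i j hij x => ENNReal.ofReal_le_ofReal (by linarith [hmono x hij]))]
    calc I + C = ∫⁻ x, (ENNReal.ofReal (tauCost (f x)) + ENNReal.ofReal (f x)) ∂m := by
          rw [lintegral_add_left htau_meas.ennreal_ofReal, hIdef, hCeq]
      _ = ∫⁻ x, ENNReal.ofReal (tauCost (f x) + f x) ∂m :=
          lintegral_congr fun x => (ENNReal.ofReal_add (tau_nonneg (hf0 x)) (hf0 x)).symm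
      _ = ∫⁻ x, ⨆ n, ENNReal.ofReal (h n x + f x) ∂m :=
          lintegral_congr fun x => (hptsup x).symm
  have hIle : I ≤ ⨆ n, ENNReal.ofReal (∫ x, h n x ∂m) := by
    have h1 : I + C ≤ (⨆ n, ENNReal.ofReal (∫ x, h n x ∂m)) + C := by
      rw [hsup]
      calc ⨆ n, ∫⁻ x, ENNReal.ofReal (h n x + f x) ∂m
          ≤ ⨆ n, (ENNReal.ofReal (∫ x, h n x ∂m) + C) := iSup_mono hAn_le
        _ = (⨆ n, ENNReal.ofReal (∫ x, h n x ∂m)) + C := (ENNReal.iSup_add _).symm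
    exact (ENNReal.add_le_add_iff_right (by simp [hCdef] : C ≠ ⊤)).mp h1
  calc (I : EReal) ≤ ((⨆ n, ENNReal.ofReal (∫ x, h n x ∂m) : ℝ≥0∞) : EReal) :=
      EReal.coe_ennreal_le_coe_ennreal_iff.2 hIle
    _ ≤ S := by
      refine coe_iSup_le fun n => ?_
      rw [EReal.coe_ennreal_ofReal]
      rcases le_total (∫ x, h n x ∂m) 0 with hneg | hpos'
      · simp only [max_eq_right hneg, EReal.coe_zero]
        exact hS0
      · simp only [max_eq_left hpos']
        exact hSn n
end TauVar


open Classical in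
/-- variational formula. For finite Borel measures `m, w` on a locally
compact σ-compact metric space `E`, the supremum over continuous compactly supported
`g` of `∫ g dw − ∫ (e^g − 1) dm` equals `∫ τ(dw/dm) dm ∈ [0,∞]` if `w ≪ m`, and `+∞`
otherwise. -/
theorem variational_formula_for_tau {E : Type*} [MetricSpace E]
    [LocallyCompactSpace E] [SigmaCompactSpace E]
    [MeasurableSpace E] [BorelSpace E]
    (m w : Measure E) [IsFiniteMeasure m] [IsFiniteMeasure w] :
    (⨆ g : {g : E → ℝ // Continuous g ∧ HasCompactSupport g},
        (((∫ x, g.1 x ∂w) - ∫ x, (Real.exp (g.1 x) - 1) ∂m : ℝ) : EReal)) =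
      if w ≪ m then
        ((∫⁻ x, ENNReal.ofReal (tauCost ((w.rnDeriv m x).toReal)) ∂m : ℝ≥0∞) : EReal)
      else (⊤ : EReal) := by
  split_ifs with hac
  · exact le_antisymm
      (iSup_le fun g => TauVar.upper_bound m w hac g.2.1 g.2.2)
      (TauVar.lower_bound m w hac)
  · exact TauVar.sup_eq_top_of_not_ac m w hac
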